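/- Lemma 4.6, part 1 (polynomial log-densities): Let 𝒫, 𝒬 be measurable Lebesgue probability densities on ℝ^d × ℝ with finite outcome means ∬ |y|·𝒫 < ∞, ∬ |y|·𝒬 < ∞, such that 𝒫_X(x) > 0 and 𝒬_X(x) > 0 for all x ∈ ℝ^d, and such that the conditional outcome densities are of log-polynomial form: there are real polynomials f, g in the d+1 variables (x,y) with, for every x ∈ ℝ^d, ∫ e^{f(x,y)} dy < ∞, ∫ e^{g(x,y)} dy < ∞, 𝒫(x,y) = 𝒫_X(x)·e^{f(x,y)} / ∫ e^{f(x,y')} dy' and 𝒬(x,y) = 𝒬_X(x)·e^{g(x,y)} / ∫ e^{g(x,y')} dy' for all y ∈ ℝ. If 𝒫_X = 𝒬_X and there is a measurable set S ⊆ ℝ^d of positive Lebesgue measure with 𝒫(x,y) = 𝒬(x,y) for all (x,y) ∈ S × ℝ, then 𝒫(x,y) = 𝒬(x,y) for all (x,y) ∈ ℝ^d × ℝ; in particular ∬ y·𝒫(x,y) dy dx = ∬ y·𝒬(x,y) dy dx. -/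

import Mathlib

open MeasureTheory MvPolynomial

noncomputable section

/-- A point of the sample space: a covariate in `ℝ^d` together with an outcome in `ℝ`. -/
abbrev Pt (d : ℕ) := (Fin d → ℝ) × ℝ

/-- A censored sample: covariate, observed outcome, and treatment bit. -/
abbrev Samp (d : ℕ) := (Fin d → ℝ) × ℝ × Bool

/-- A generalized propensity score: a measurable function into `[0,1]`. -/
def IsPropensity {d : ℕ} (p : Pt d → ℝ) : Prop :=
  Measurable p ∧ ∀ z, p z ∈ Set.Icc (0 : ℝ) 1

/-- A (Lebesgue) probability density on `ℝ^d × ℝ` with finite outcome mean. -/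
def IsDensity {d : ℕ} (P : Pt d → ℝ) : Prop :=
  Measurable P ∧ (∀ z, 0 ≤ P z) ∧ Integrable P ∧ (∫ z, P z = 1) ∧
    Integrable fun z : Pt d => |z.2| * P z

/-- The `X`-marginal of a density. -/
def margX {d : ℕ} (P : Pt d → ℝ) (x : Fin d → ℝ) : ℝ := ∫ y, P (x, y)

/-- A density-form observational study `(p₀, p₁, 𝒫₀, 𝒫₁)`. -/
def ValidStudy {d : ℕ} (p₀ p₁ P₀ P₁ : Pt d → ℝ) : Prop :=
  IsPropensity p₀ ∧ IsPropensity p₁ ∧ IsDensity P₀ ∧ IsDensity P₁ ∧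
    (∀ x, margX P₀ x = margX P₁ x) ∧
    (∀ x, (∫ y, p₀ (x, y) * P₀ (x, y)) + (∫ y, p₁ (x, y) * P₁ (x, y)) = margX P₀ x)

/-- The censored density `C_D (x, y, t) = p_t(x,y) ⬝ 𝒫_t(x,y)`. -/
def censoredDensity {d : ℕ} (p₀ p₁ P₀ P₁ : Pt d → ℝ) : Samp d → ℝ :=
  fun z => if z.2.2 then p₁ (z.1, z.2.1) * P₁ (z.1, z.2.1)
           else p₀ (z.1, z.2.1) * P₀ (z.1, z.2.1)

/-- Mean outcome `∬ y ⬝ 𝒫(x,y) dy dx` of a density. -/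
def outMean {d : ℕ} (P : Pt d → ℝ) : ℝ := ∫ z : Pt d, z.2 * P z

/-- The average treatment effect of a study. -/
def ate {d : ℕ} (P₀ P₁ : Pt d → ℝ) : ℝ := outMean P₁ - outMean P₀

/-- `Pr_D[T = 1]`. -/
def prT1 {d : ℕ} (p₁ P₁ : Pt d → ℝ) : ℝ := ∫ z, p₁ z * P₁ z

/-- The average treatment effect on the treated. -/
def att {d : ℕ} (p₀ p₁ P₀ P₁ : Pt d → ℝ) : ℝ :=
  ((∫ z : Pt d, z.2 * (p₁ z * P₁ z)) - outMean P₀ + ∫ z : Pt d, z.2 * (p₀ z * P₀ z)) /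
    prT1 p₁ P₁

/-- Realizability of a study with respect to concept classes `(ℙ, 𝔻)`. -/
def Realizable {d : ℕ} (PP DD : Set (Pt d → ℝ)) (p₀ p₁ P₀ P₁ : Pt d → ℝ) : Prop :=
  ValidStudy p₀ p₁ P₀ P₁ ∧ p₀ ∈ PP ∧ p₁ ∈ PP ∧ P₀ ∈ DD ∧ P₁ ∈ DD

/-- Compatibility of a tuple `(p, 𝒫)` with `(ℙ, 𝔻)`. -/
def Compatible {d : ℕ} (PP DD : Set (Pt d → ℝ)) (p P : Pt d → ℝ) : Prop :=
  p ∈ PP ∧ P ∈ DD ∧ ∃ p' ∈ PP, ∃ P' ∈ DD, ValidStudy p p' P P'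

/-- Condition 1 (the identifiability condition). -/
def Condition1 {d : ℕ} (PP DD : Set (Pt d → ℝ)) : Prop :=
  ∀ p P q Q : Pt d → ℝ, Compatible PP DD p P → Compatible PP DD q Q →
    outMean P = outMean Q ∨ margX P ≠ margX Q ∨
      ∃ x y, 0 < margX P x ∧ p (x, y) * P (x, y) ≠ q (x, y) * Q (x, y)

/-- The class `ℙ_OU(c)`: unconfoundedness plus `c`-overlap. -/
def POU {d : ℕ} (c : ℝ) : Set (Pt d → ℝ) :=
  {p | Measurable p ∧ (∀ x y₁ y₂, p (x, y₁) = p (x, y₂)) ∧ ∀ z, c < p z ∧ p z < 1 - c}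

/-- The class `𝔻_all` of all densities with finite outcome means. -/
def Dall (d : ℕ) : Set (Pt d → ℝ) := {P | IsDensity P}

/-- The class `ℙ_O(c)`: `c`-overlap. -/
def PO {d : ℕ} (c : ℝ) : Set (Pt d → ℝ) :=
  {p | Measurable p ∧ ∀ z, c < p z ∧ p z < 1 - c}

/-- Condition 2 with constant `c`. -/
def Condition2 {d : ℕ} (c : ℝ) (DD : Set (Pt d → ℝ)) : Prop :=
  ∀ P ∈ DD, ∀ Q ∈ DD, outMean P ≠ outMean Q →
    margX P ≠ margX Q ∨
      ∃ x y, 0 < margX P x ∧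
        ((0 < P (x, y) ∧ (1 - c) * Q (x, y) ≤ c * P (x, y)) ∨
         (0 < Q (x, y) ∧ (1 - c) * P (x, y) ≤ c * Q (x, y)))

/-- The class `ℙ_U(c)`: unconfoundedness plus `c`-weak-overlap. -/
def PU {d : ℕ} (c : ℝ) : Set (Pt d → ℝ) :=
  {p | Measurable p ∧ (∀ z, p z ∈ Set.Icc (0 : ℝ) 1) ∧
       (∀ x y₁ y₂, p (x, y₁) = p (x, y₂)) ∧
       ∃ S : Set (Fin d → ℝ), MeasurableSet S ∧ ENNReal.ofReal c ≤ volume S ∧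
         ∀ x ∈ S, ∀ y, c < p (x, y)}

/-- Condition 3 with constant `c`. -/
def Condition3 {d : ℕ} (c : ℝ) (DD : Set (Pt d → ℝ)) : Prop :=
  ∀ P ∈ DD, ∀ Q ∈ DD, outMean P ≠ outMean Q →
    margX P ≠ margX Q ∨
      ¬ ∃ S : Set (Fin d → ℝ), MeasurableSet S ∧ ENNReal.ofReal c ≤ volume S ∧
          ∀ x ∈ S, ∀ y, P (x, y) = Q (x, y)

/-- `c`-RD-design. -/
def IsRDDesign {d : ℕ} (c : ℝ) (p₀ p₁ P₀ P₁ : Pt d → ℝ) : Prop :=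
  ValidStudy p₀ p₁ P₀ P₁ ∧
    ∃ S : Set (Fin d → ℝ), MeasurableSet S ∧
      ENNReal.ofReal c < volume S ∧ ENNReal.ofReal c < volume Sᶜ ∧
      (∀ x y, p₀ (x, y) = Set.indicator Sᶜ (fun _ => (1 : ℝ)) x) ∧
      (∀ x y, p₁ (x, y) = Set.indicator S (fun _ => (1 : ℝ)) x)

/-- Total variation distance between densities. -/
def dTV {d : ℕ} (f g : Pt d → ℝ) : ℝ := (1 / 2) * ∫ z, |f z - g z|

/-- The truncation of a density `P` to `S × ℝ`. -/
def truncDens {d : ℕ} (P : Pt d → ℝ) (S : Set (Fin d → ℝ)) : Pt d → ℝ :=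
  fun z => Set.indicator (S ×ˢ (Set.univ : Set ℝ)) P z / ∫ w in S ×ˢ (Set.univ : Set ℝ), P w

/-- Condition 5 with constants `c, C`. -/
def Condition5 {d : ℕ} (c C : ℝ) (DD : Set (Pt d → ℝ)) : Prop :=
  ∀ P ∈ DD, ∀ Q ∈ DD, ∀ S : Set (Fin d → ℝ), MeasurableSet S →
    ENNReal.ofReal c < volume S →
    0 < ∫ z in S ×ˢ (Set.univ : Set ℝ), P z →
    0 < ∫ z in S ×ˢ (Set.univ : Set ℝ), Q z →
    ∀ ε : ℝ, 0 < ε → dTV (truncDens P S) (truncDens Q S) ≤ ε →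
      |outMean P - outMean Q| ≤ ε * C

/-- Condition 6 (the identifiability condition for HTE). -/
def Condition6 {d : ℕ} (PP DD : Set (Pt d → ℝ)) : Prop :=
  ∀ p P q Q : Pt d → ℝ, Compatible PP DD p P → Compatible PP DD q Q →
    (p, P) ≠ (q, Q) →
    P = Q ∨ margX P ≠ margX Q ∨
      ∃ x y, 0 < margX P x ∧ p (x, y) * P (x, y) ≠ q (x, y) * Q (x, y)

/-- A finite set `s` is `γ`-shattered by the class `H`. -/
def FatShattered {Z : Type*} (H : Set (Z → ℝ)) (γ : ℝ) (s : Finset Z) : Prop :=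
  ∃ t : Z → ℝ, ∀ b : Z → Bool, ∃ h ∈ H, ∀ z ∈ s,
    if b z then γ ≤ h z - t z else γ ≤ t z - h z

/-- The fat-shattering dimension at scale `γ`. -/
def fatDim {Z : Type*} (H : Set (Z → ℝ)) (γ : ℝ) : ℕ∞ :=
  ⨆ s ∈ {s : Finset Z | FatShattered H γ s}, (s.card : ℕ∞)

/-- The censored distribution: the measure on samples whose density w.r.t.
(Lebesgue × Lebesgue × counting) is the censored density. -/
def censMeasure {d : ℕ} (p₀ p₁ P₀ P₁ : Pt d → ℝ) : Measure (Samp d) :=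
  ((volume : Measure (Fin d → ℝ)).prod
      ((volume : Measure ℝ).prod (Measure.count : Measure Bool))).withDensity
    fun z => ENNReal.ofReal (censoredDensity p₀ p₁ P₀ P₁ z)

/-- A probability density (no finite-mean requirement). -/
def IsProbDensity {d : ℕ} (P : Pt d → ℝ) : Prop :=
  Measurable P ∧ (∀ z, 0 ≤ P z) ∧ Integrable P ∧ ∫ z, P z = 1

/-- `Cov` is a total-variation `ε`-cover of `DD` by probability densities. -/
def IsTVCover {d : ℕ} (DD : Set (Pt d → ℝ)) (ε : ℝ) (Cov : Finset (Pt d → ℝ)) : Prop :=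
  (∀ g ∈ Cov, IsProbDensity g) ∧ ∀ P ∈ DD, ∃ g ∈ Cov, dTV P g ≤ ε

/-- Condition 4 with constant `c` and mass function `M`. -/
def Condition4 {d : ℕ} (c : ℝ) (M : ℝ → ℝ) (DD : Set (Pt d → ℝ)) : Prop :=
  ∀ ε : ℝ, 0 < ε → ∀ P ∈ DD, ∀ Q ∈ DD, ε < |outMean P - outMean Q| →
    ∃ S : Set (Pt d), MeasurableSet S ∧
      M ε / c ≤ ∫ z in S, P z ∧ M ε / c ≤ ∫ z in S, Q z ∧
      ∀ z ∈ S, (0 < P z ∧ 2 * (1 - c) * Q z ≤ c * P z) ∨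
               (0 < Q z ∧ 2 * (1 - c) * P z ≤ c * Q z)

/-- The unit cube `[0,1]^d` of covariates. -/
def unitCube (d : ℕ) : Set (Fin d → ℝ) := Set.univ.pi fun _ => Set.Icc (0 : ℝ) 1

/-- The unit cube `K = [0,1]^{d+1}` of covariate-outcome pairs. -/
def Kcube (d : ℕ) : Set (Pt d) := unitCube d ×ˢ Set.Icc (0 : ℝ) 1

end

section AuxPoly

lemma aeval_eq_eval'' {n : ℕ} (v : Fin n → ℝ) (p : MvPolynomial (Fin n) ℝ) :
    aeval v p = eval v p := by
  rw [aeval_def, Algebra.algebraMap_self]; rfl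

lemma mv_zero_set : ∀ (n : ℕ) (p : MvPolynomial (Fin n) ℝ), p ≠ 0 →
    volume {v : Fin n → ℝ | eval v p = 0} = 0 := by
  intro n
  induction n with
  | zero =>
    intro p hp
    obtain ⟨a, rfl⟩ := MvPolynomial.C_surjective (Fin 0) p
    have ha : a ≠ 0 := by simpa using hp
    have : {v : Fin 0 → ℝ | eval v (C a : MvPolynomial (Fin 0) ℝ) = 0} = ∅ := by
      ext v; simp [ha]
    rw [this]; simp
  | succ n ih =>
    intro p hp
    set q := MvPolynomial.finSuccEquiv ℝ n p with hqdef
    have hq0 : q ≠ 0 := fun h0 => hp ((MvPolynomial.finSuccEquiv ℝ n).injective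
      (by rw [← hqdef, h0, map_zero]))
    have hex : ∃ k, q.coeff k ≠ 0 := by
      by_contra h
      push_neg at h
      exact hq0 (Polynomial.ext fun k => by simp [h k])
    obtain ⟨k, hk⟩ := hex
    have hN : volume {s : Fin n → ℝ | eval s (q.coeff k) = 0} = 0 := ih _ hk
    set B' : Set ((Fin n → ℝ) × ℝ) := {sy | eval (Fin.cons sy.2 sy.1 : Fin (n+1) → ℝ) p = 0}
      with hB'def
    have hcont : Continuous fun sy : (Fin n → ℝ) × ℝ =>
        eval (Fin.cons sy.2 sy.1 : Fin (n+1) → ℝ) p := by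
      refine (MvPolynomial.continuous_eval p).comp ?_
      apply continuous_pi
      intro i
      refine Fin.cases ?_ ?_ i
      · simpa using continuous_snd
      · intro j; simp only [Fin.cons_succ]; exact (continuous_apply j).comp continuous_fst
    have hB' : MeasurableSet B' := hcont.measurable (measurableSet_singleton 0)
    have hB'0 : (volume : Measure ((Fin n → ℝ) × ℝ)) B' = 0 := by
      rw [Measure.volume_eq_prod _ _, Measure.measure_prod_null hB']
      filter_upwards [measure_eq_zero_iff_ae_notMem.mp hN] with s hs
      have hmap : Polynomial.map (eval s) q ≠ 0 := by
        intro h0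
        exact hs (by simpa [Polynomial.coeff_map] using congrArg (fun r => Polynomial.coeff r k) h0)
      have hpre : (Prod.mk s ⁻¹' B') = {y | Polynomial.eval y (Polynomial.map (eval s) q) = 0} := by
        ext y
        simp only [hB'def, Set.mem_preimage, Set.mem_setOf_eq]
        rw [MvPolynomial.eval_eq_eval_mv_eval']
      show volume (Prod.mk s ⁻¹' B') = 0
      rw [hpre]
      exact Set.Finite.measure_zero (Polynomial.finite_setOf_isRoot hmap) _
    set B : Set (ℝ × (Fin n → ℝ)) := {ys | eval (Fin.cons ys.1 ys.2 : Fin (n+1) → ℝ) p = 0}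
      with hBdef
    have hBswap : B = Prod.swap ⁻¹' B' := by
      ext ⟨y, s⟩
      simp only [hBdef, hB'def, Set.mem_setOf_eq, Set.mem_preimage, Prod.swap_prod_mk]
    have hBmeas : MeasurableSet B := measurable_swap hB'
    have hB0 : (volume : Measure (ℝ × (Fin n → ℝ))) B = 0 := by
      rw [hBswap, Measure.volume_eq_prod _ _, ← Measure.map_apply measurable_swap hB', Measure.prod_swap,
        ← Measure.volume_eq_prod _ _]
      exact hB'0
    have hA : {v : Fin (n+1) → ℝ | eval v p = 0}
        = (MeasurableEquiv.piFinSuccAbove (fun _ : Fin (n+1) => ℝ) 0) ⁻¹' B := by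
      ext v
      have hv : (Fin.cons (v 0) (Fin.removeNth 0 v) : Fin (n+1) → ℝ)
          = v := by
        funext i
        refine Fin.cases ?_ ?_ i
        · simp
        · intro j; simp [Fin.removeNth, Fin.succAbove_zero, Fin.tail]
      simp only [Set.mem_preimage, Set.mem_setOf_eq, hBdef,
        MeasurableEquiv.piFinSuccAbove_apply, Fin.insertNthEquiv, Equiv.coe_fn_symm_mk,
        Fin.removeNth, hv]
    rw [hA, (volume_preserving_piFinSuccAbove (fun _ : Fin (n+1) => ℝ) 0).measure_preimage
      hBmeas.nullMeasurableSet]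
    exact hB0

lemma main_thm {d : ℕ} (P Q : Pt d → ℝ)
    (hPX : ∀ x, 0 < margX P x) (hQX : ∀ x, 0 < margX Q x)
    (f g : MvPolynomial (Fin (d + 1)) ℝ)
    (hfInt : ∀ x : Fin d → ℝ,
      Integrable fun y : ℝ => Real.exp (eval (Fin.snoc x y) f))
    (hgInt : ∀ x : Fin d → ℝ,
      Integrable fun y : ℝ => Real.exp (eval (Fin.snoc x y) g))
    (hPform : ∀ x y, P (x, y) =
      margX P x * Real.exp (eval (Fin.snoc x y) f) /
        ∫ y' : ℝ, Real.exp (eval (Fin.snoc x y') f))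
    (hQform : ∀ x y, Q (x, y) =
      margX Q x * Real.exp (eval (Fin.snoc x y) g) /
        ∫ y' : ℝ, Real.exp (eval (Fin.snoc x y') g))
    (hmarg : margX P = margX Q)
    (S : Set (Fin d → ℝ)) (hS : MeasurableSet S) (hSpos : 0 < volume S)
    (hagree : ∀ x ∈ S, ∀ y : ℝ, P (x, y) = Q (x, y)) :
    (∀ z : Pt d, P z = Q z) ∧ outMean P = outMean Q := by
  classical
  have hZfpos : ∀ x, 0 < ∫ y : ℝ, Real.exp (eval (Fin.snoc x y) f) :=
    fun x => integral_exp_pos (hfInt x)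
  have hZgpos : ∀ x, 0 < ∫ y : ℝ, Real.exp (eval (Fin.snoc x y) g) :=
    fun x => integral_exp_pos (hgInt x)
  -- cross-multiplied identity on S
  have hkey : ∀ x ∈ S, ∀ y : ℝ,
      Real.exp (eval (Fin.snoc x y) f) * (∫ y' : ℝ, Real.exp (eval (Fin.snoc x y') g))
        = Real.exp (eval (Fin.snoc x y) g) * ∫ y' : ℝ, Real.exp (eval (Fin.snoc x y') f) := by
    intro x hx y
    have h1 := hagree x hx y
    rw [hPform, hQform, ← hmarg] at h1
    rw [div_eq_div_iff (hZfpos x).ne' (hZgpos x).ne'] at h1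
    rw [mul_assoc, mul_assoc] at h1
    exact mul_left_cancel₀ (hPX x).ne' h1
  -- constancy in y of (f - g) on S
  have hconst : ∀ x ∈ S, ∀ y : ℝ,
      eval (Fin.snoc x y) f - eval (Fin.snoc x y) g
        = eval (Fin.snoc x (0:ℝ)) f - eval (Fin.snoc x (0:ℝ)) g := by
    intro x hx y
    have h2 := hkey x hx y
    have h3 := hkey x hx 0
    have hzz : (∫ y' : ℝ, Real.exp (eval (Fin.snoc x y') g))
        * (∫ y' : ℝ, Real.exp (eval (Fin.snoc x y') f)) ≠ 0 :=
      (mul_pos (hZgpos x) (hZfpos x)).ne'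
    have h4 : Real.exp (eval (Fin.snoc x y) f) * Real.exp (eval (Fin.snoc x (0:ℝ)) g)
        = Real.exp (eval (Fin.snoc x y) g) * Real.exp (eval (Fin.snoc x (0:ℝ)) f) := by
      refine mul_right_cancel₀ hzz ?_
      calc Real.exp (eval (Fin.snoc x y) f) * Real.exp (eval (Fin.snoc x (0:ℝ)) g)
              * ((∫ y' : ℝ, Real.exp (eval (Fin.snoc x y') g))
                * (∫ y' : ℝ, Real.exp (eval (Fin.snoc x y') f)))
            = (Real.exp (eval (Fin.snoc x y) f)
                * (∫ y' : ℝ, Real.exp (eval (Fin.snoc x y') g)))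
              * (Real.exp (eval (Fin.snoc x (0:ℝ)) g)
                * (∫ y' : ℝ, Real.exp (eval (Fin.snoc x y') f))) := by ring
          _ = (Real.exp (eval (Fin.snoc x y) g)
                * (∫ y' : ℝ, Real.exp (eval (Fin.snoc x y') f)))
              * (Real.exp (eval (Fin.snoc x (0:ℝ)) f)
                * (∫ y' : ℝ, Real.exp (eval (Fin.snoc x y') g))) := by rw [h2, ← h3]
          _ = Real.exp (eval (Fin.snoc x y) g) * Real.exp (eval (Fin.snoc x (0:ℝ)) f)
              * ((∫ y' : ℝ, Real.exp (eval (Fin.snoc x y') g))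
                * (∫ y' : ℝ, Real.exp (eval (Fin.snoc x y') f))) := by ring
    rw [← Real.exp_add, ← Real.exp_add] at h4
    have h5 := Real.exp_eq_exp.mp h4
    linarith
  -- the substitution y ↦ 0 as a polynomial operation
  set u : Fin (d+1) → MvPolynomial (Fin (d+1)) ℝ :=
    Fin.snoc (fun j : Fin d => X (Fin.castSucc j)) 0 with hu
  have keyEval : ∀ (p : MvPolynomial (Fin (d+1)) ℝ) (x : Fin d → ℝ) (y : ℝ),
      eval (Fin.snoc x y) (bind₁ u p) = eval (Fin.snoc x (0:ℝ)) p := by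
    intro p x y
    rw [← aeval_eq_eval'', aeval_bind₁]
    have harg : (fun i => aeval (Fin.snoc x y) (u i)) = (Fin.snoc x (0:ℝ) : Fin (d+1) → ℝ) := by
      funext i
      refine Fin.lastCases ?_ ?_ i
      · simp [hu]
      · intro j; simp [hu]
    rw [harg, aeval_eq_eval'']
  set r : MvPolynomial (Fin (d+1)) ℝ := (f - g) - bind₁ u (f - g) with hr
  have hrS : ∀ x ∈ S, ∀ y : ℝ, eval (Fin.snoc x y) r = 0 := by
    intro x hx y
    rw [hr, map_sub, keyEval, map_sub, map_sub]
    have := hconst x hx y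
    linarith
  -- r vanishes on a positive-measure set, hence r = 0
  have hr0 : r = 0 := by
    by_contra hrne
    have hzero := mv_zero_set (d+1) r hrne
    have hsub : {v : Fin (d+1) → ℝ | Fin.init v ∈ S}
        ⊆ {v : Fin (d+1) → ℝ | eval v r = 0} := by
      intro v hv
      have : eval (Fin.snoc (Fin.init v) (v (Fin.last d))) r = 0 :=
        hrS (Fin.init v) hv (v (Fin.last d))
      rwa [Fin.snoc_init_self] at this
    have hTzero : volume {v : Fin (d+1) → ℝ | Fin.init v ∈ S} = 0 :=
      measure_mono_null hsub hzero
    -- but this set has positive measure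
    have hTeq : {v : Fin (d+1) → ℝ | Fin.init v ∈ S}
        = (MeasurableEquiv.piFinSuccAbove (fun _ : Fin (d+1) => ℝ) (Fin.last d)) ⁻¹'
          ((Set.univ : Set ℝ) ×ˢ S) := by
      ext v
      have hrn : Fin.removeNth (Fin.last d) v = Fin.init v := by
        funext j
        simp [Fin.removeNth, Fin.succAbove_last, Fin.init]
      simp [MeasurableEquiv.piFinSuccAbove_apply, Fin.insertNthEquiv, Equiv.coe_fn_symm_mk,
        hrn]
    have hTvol : volume {v : Fin (d+1) → ℝ | Fin.init v ∈ S}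
        = volume ((Set.univ : Set ℝ) ×ˢ S) := by
      rw [hTeq]
      exact (volume_preserving_piFinSuccAbove (fun _ : Fin (d+1) => ℝ) (Fin.last d)).measure_preimage
        (MeasurableSet.univ.prod hS).nullMeasurableSet
    rw [hTvol, Measure.volume_eq_prod _ _, Measure.prod_prod, Real.volume_univ] at hTzero
    exact (ENNReal.mul_pos (by simp) hSpos.ne').ne' hTzero
  -- global constancy
  have hglob : ∀ (x : Fin d → ℝ) (y : ℝ),
      eval (Fin.snoc x y) f = eval (Fin.snoc x (0:ℝ)) f - eval (Fin.snoc x (0:ℝ)) g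
        + eval (Fin.snoc x y) g := by
    intro x y
    have : eval (Fin.snoc x y) r = 0 := by rw [hr0]; simp
    rw [hr, map_sub, keyEval, map_sub, map_sub] at this
    linarith
  -- normalization constants agree up to exp(c x)
  have hPQ : ∀ z : Pt d, P z = Q z := by
    rintro ⟨x, y⟩
    set c : ℝ := eval (Fin.snoc x (0:ℝ)) f - eval (Fin.snoc x (0:ℝ)) g with hc
    have hEf : ∀ y' : ℝ, Real.exp (eval (Fin.snoc x y') f)
        = Real.exp c * Real.exp (eval (Fin.snoc x y') g) := by
      intro y'
      rw [← Real.exp_add, ← hglob x y']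
    have hZ : (∫ y' : ℝ, Real.exp (eval (Fin.snoc x y') f))
        = Real.exp c * ∫ y' : ℝ, Real.exp (eval (Fin.snoc x y') g) := by
      simp only [hEf]
      exact integral_const_mul _ _
    rw [hPform x y, hQform x y, ← hmarg, hZ, hEf y, mul_div_assoc,
      mul_div_mul_left _ _ (Real.exp_ne_zero c), ← mul_div_assoc]
  refine ⟨hPQ, ?_⟩
  have : P = Q := funext hPQ
  rw [this]


end AuxPoly

/-- Lemma 4.6, part 1 (polynomial log-densities): two densities with log-polynomial
conditional outcome densities, equal everywhere-positive `X`-marginals, that agree on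
`S × ℝ` for a set `S` of positive Lebesgue measure, agree everywhere; in particular they
have equal mean outcomes. -/
theorem polynomial_log_densities_extrapolate
    (d : ℕ) (hd : 1 ≤ d) (P Q : Pt d → ℝ)
    (hP : IsDensity P) (hQ : IsDensity Q)
    (hPX : ∀ x, 0 < margX P x) (hQX : ∀ x, 0 < margX Q x)
    (f g : MvPolynomial (Fin (d + 1)) ℝ)
    (hfInt : ∀ x : Fin d → ℝ,
      Integrable fun y : ℝ => Real.exp (eval (Fin.snoc x y) f))
    (hgInt : ∀ x : Fin d → ℝ,
      Integrable fun y : ℝ => Real.exp (eval (Fin.snoc x y) g))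
    (hPform : ∀ x y, P (x, y) =
      margX P x * Real.exp (eval (Fin.snoc x y) f) /
        ∫ y' : ℝ, Real.exp (eval (Fin.snoc x y') f))
    (hQform : ∀ x y, Q (x, y) =
      margX Q x * Real.exp (eval (Fin.snoc x y) g) /
        ∫ y' : ℝ, Real.exp (eval (Fin.snoc x y') g))
    (hmarg : margX P = margX Q)
    (S : Set (Fin d → ℝ)) (hS : MeasurableSet S) (hSpos : 0 < volume S)
    (hagree : ∀ x ∈ S, ∀ y : ℝ, P (x, y) = Q (x, y)) :
    (∀ z : Pt d, P z = Q z) ∧ outMean P = outMean Q := by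
  exact main_thm P Q hPX hQX f g hfInt hgInt hPform hQform hmarg S hS hSpos hagree
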